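/- Let S be a dense birecurrent set and let 𝒜 be its minimal automaton, with transition morphism φ_𝒜. Then for every 𝓗-class H of the minimal ideal of the transition monoid φ_𝒜(A*), one has i(S) = Card(H) / Card(H ∩ φ_𝒜(S)), where i(S) is the index of S. -/

import Mathlib

namespace Birec

variable {A : Type*}

/-- The left quotient `u⁻¹S = {v | u v ∈ S}`. -/
def leftQuot (S : Set (List A)) (u : List A) : Set (List A) := {v | u ++ v ∈ S}

/-- A language is recognizable iff it has finitely many left quotients (Nerode). -/
def Recognizable (S : Set (List A)) : Prop := (Set.range (leftQuot S)).Finite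

/-- The reversal `S̃` of a language. -/
def langRev (S : Set (List A)) : Set (List A) := {w | w.reverse ∈ S}

/-- A recognizable set is recurrent if its minimal automaton (whose states are the
nonempty left quotients) is strongly connected. -/
def Recurrent (S : Set (List A)) : Prop :=
  Recognizable S ∧
    ∀ u v : List A, (leftQuot S u).Nonempty → (leftQuot S v).Nonempty →
      ∃ w : List A, leftQuot S (u ++ w) = leftQuot S v

/-- A set is birecurrent if it is recurrent together with its reversal. -/
def Birecurrent (S : Set (List A)) : Prop := Recurrent S ∧ Recurrent (langRev S)

/-- A set is dense if every word is a factor of one of its words. -/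
def LangDense (S : Set (List A)) : Prop := ∀ v : List A, ∃ u w : List A, u ++ v ++ w ∈ S

end Birec
namespace Birec

variable {A : Type*}

/-- The states of the minimal automaton of `S`: the nonempty left quotients. -/
def MinStates (S : Set (List A)) : Set (Set (List A)) :=
  {q | q.Nonempty ∧ ∃ u : List A, q = leftQuot S u}

/-- The terminal states of the minimal automaton of `S`. -/
def TerminalStates (S : Set (List A)) : Set (Set (List A)) :=
  {q | q ∈ MinStates S ∧ [] ∈ q}

/-- The rank of a word in the minimal automaton of `S`: the number of states in the
image of the (partial) map induced by `w` on the states. -/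
noncomputable def mrank (S : Set (List A)) (w : List A) : ℕ :=
  {T : Set (List A) | T.Nonempty ∧ ∃ u : List A, T = leftQuot S (u ++ w)}.ncard

/-- `w` is a word of minimal nonzero rank in the minimal automaton of `S`. -/
def IsMinNonzeroMrank (S : Set (List A)) (w : List A) : Prop :=
  mrank S w ≠ 0 ∧ ∀ v : List A, mrank S v ≠ 0 → mrank S w ≤ mrank S v

/-- The set of terminal states is saturated by `w`: it is a union of classes of
the kernel of `w` (in particular it is contained in the domain of `w`). -/
def SaturatedBy (S : Set (List A)) (w : List A) : Prop :=
  (∀ q ∈ TerminalStates S, (leftQuot q w).Nonempty) ∧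
    ∀ p q : Set (List A), p ∈ MinStates S → q ∈ MinStates S →
      (leftQuot p w).Nonempty → (leftQuot q w).Nonempty →
      leftQuot p w = leftQuot q w → ([] ∈ p ↔ [] ∈ q)

/-- The degree of `S`: the minimal nonzero rank of a word in its minimal automaton. -/
noncomputable def langDegree (S : Set (List A)) : ℕ :=
  sInf {n : ℕ | n ≠ 0 ∧ ∃ w : List A, mrank S w = n}

end Birec
namespace Birec

variable {A : Type*}

open Classical in
/-- The element of the transition monoid of the minimal automaton of `S` induced by the
word `w`: a partial map (realized as an `Option`-valued map) on the states. -/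
noncomputable def transMap (S : Set (List A)) (w : List A) :
    Set (List A) → Option (Set (List A)) := fun q =>
  if q ∈ MinStates S ∧ (leftQuot q w).Nonempty then some (leftQuot q w) else none

/-- Composition of partial maps (first `f`, then `g`). -/
def pcomp {σ : Type*} (f g : σ → Option σ) : σ → Option σ := fun q => (f q).bind g

/-- The transition monoid `φ_𝒜(A*)` of the minimal automaton of `S`. -/
def transMonoid (S : Set (List A)) : Set (Set (List A) → Option (Set (List A))) :=
  Set.range (transMap S)

/-- Green's relation `𝓡` in a monoid `M` of partial maps. -/
def GreenR {σ : Type*} (M : Set (σ → Option σ)) (m n : σ → Option σ) : Prop :=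
  (∃ p ∈ M, pcomp m p = n) ∧ ∃ p ∈ M, pcomp n p = m

/-- Green's relation `𝓛` in a monoid `M` of partial maps. -/
def GreenL {σ : Type*} (M : Set (σ → Option σ)) (m n : σ → Option σ) : Prop :=
  (∃ p ∈ M, pcomp p m = n) ∧ ∃ p ∈ M, pcomp p n = m

/-- Green's relation `𝓗`. -/
def GreenH {σ : Type*} (M : Set (σ → Option σ)) (m n : σ → Option σ) : Prop :=
  GreenR M m n ∧ GreenL M m n

/-- `I` is a (two-sided) ideal of the monoid `M` of partial maps. -/
def IsIdeal {σ : Type*} (M I : Set (σ → Option σ)) : Prop :=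
  I.Nonempty ∧ I ⊆ M ∧ ∀ m ∈ I, ∀ p ∈ M, ∀ q ∈ M, pcomp (pcomp p m) q ∈ I

/-- `I` is the minimal ideal of the monoid `M` of partial maps. -/
def IsMinimalIdeal {σ : Type*} (M I : Set (σ → Option σ)) : Prop :=
  IsIdeal M I ∧ ∀ J : Set (σ → Option σ), IsIdeal M J → I ⊆ J

end Birec

namespace Birec

variable {A : Type*}

-- ### basic lemmas
theorem leftQuot_append (S : Set (List A)) (u v : List A) :
    leftQuot S (u ++ v) = leftQuot (leftQuot S u) v := by
  ext x; simp [leftQuot, List.append_assoc]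

theorem leftQuot_nil (S : Set (List A)) : leftQuot S [] = S := rfl

theorem leftQuot_sub_nonempty {q : Set (List A)} {u v : List A}
    (h : (leftQuot (leftQuot q u) v).Nonempty) : (leftQuot q u).Nonempty := by
  obtain ⟨x, hx⟩ := h; exact ⟨v ++ x, hx⟩

theorem mem_minStates_leftQuot {S q : Set (List A)} (hq : q ∈ MinStates S) {u : List A}
    (h : (leftQuot q u).Nonempty) : leftQuot q u ∈ MinStates S := by
  obtain ⟨-, u', rfl⟩ := hq
  exact ⟨⟨h.choose, h.choose_spec⟩, u' ++ u, (leftQuot_append S u' u).symm⟩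

theorem transMap_apply_of_mem {S q : Set (List A)} (hq : q ∈ MinStates S) {u : List A}
    (h : (leftQuot q u).Nonempty) : transMap S u q = some (leftQuot q u) := by
  simp [transMap, hq, h]

theorem transMap_apply_none {S q : Set (List A)} {u : List A}
    (h : ¬ (q ∈ MinStates S ∧ (leftQuot q u).Nonempty)) : transMap S u q = none := by
  simp only [transMap, if_neg h]

theorem transMap_eq_some_iff {S q t : Set (List A)} {u : List A} :
    transMap S u q = some t ↔ q ∈ MinStates S ∧ (leftQuot q u).Nonempty ∧ t = leftQuot q u := by
  constructor
  · intro h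
    by_cases hc : q ∈ MinStates S ∧ (leftQuot q u).Nonempty
    · refine ⟨hc.1, hc.2, ?_⟩
      rw [transMap_apply_of_mem hc.1 hc.2] at h
      exact (Option.some_inj.mp h).symm
    · rw [transMap_apply_none hc] at h; cases h
  · rintro ⟨h1, h2, rfl⟩; exact transMap_apply_of_mem h1 h2

theorem pcomp_assoc {σ : Type*} (f g h : σ → Option σ) :
    pcomp (pcomp f g) h = pcomp f (pcomp g h) := by
  funext q; cases hf : f q <;> simp [pcomp, hf]

theorem transMap_append (S : Set (List A)) (u v : List A) :
    transMap S (u ++ v) = pcomp (transMap S u) (transMap S v) := by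
  funext q
  by_cases hq : q ∈ MinStates S
  · by_cases h1 : (leftQuot q u).Nonempty
    · have hm : leftQuot q u ∈ MinStates S := mem_minStates_leftQuot hq h1
      by_cases h2 : (leftQuot (leftQuot q u) v).Nonempty
      · have : (leftQuot q (u ++ v)).Nonempty := by rw [leftQuot_append]; exact h2
        rw [transMap_apply_of_mem hq this]
        simp only [pcomp, transMap_apply_of_mem hq h1, Option.bind_some,
          transMap_apply_of_mem hm h2, leftQuot_append]
      · have : ¬ (leftQuot q (u ++ v)).Nonempty := by rw [leftQuot_append]; exact h2
        rw [transMap_apply_none (by tauto)]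
        simp only [pcomp, transMap_apply_of_mem hq h1, Option.bind_some]
        rw [transMap_apply_none (show ¬ (leftQuot q u ∈ MinStates S ∧ (leftQuot (leftQuot q u) v).Nonempty) by tauto)]
    · have : ¬ (leftQuot q (u ++ v)).Nonempty := fun h => h1 (by
        rw [leftQuot_append] at h; exact leftQuot_sub_nonempty h)
      rw [transMap_apply_none (by tauto)]
      simp only [pcomp, transMap_apply_none (S := S) (u := u) (by tauto)]
      rfl
  · rw [transMap_apply_none (by tauto)]
    simp only [pcomp, transMap_apply_none (S := S) (u := u) (by tauto)]
    rfl

theorem pcomp_mem {S : Set (List A)} {x y : Set (List A) → Option (Set (List A))}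
    (hx : x ∈ transMonoid S) (hy : y ∈ transMonoid S) : pcomp x y ∈ transMonoid S := by
  obtain ⟨u, rfl⟩ := hx; obtain ⟨v, rfl⟩ := hy
  exact ⟨u ++ v, transMap_append S u v⟩

theorem e_mem (S : Set (List A)) : transMap S [] ∈ transMonoid S := ⟨[], rfl⟩

theorem transMap_mem_value {S q t : Set (List A)} {x : Set (List A) → Option (Set (List A))}
    (hx : x ∈ transMonoid S) (h : x q = some t) : q ∈ MinStates S ∧ t ∈ MinStates S := by
  obtain ⟨u, rfl⟩ := hx
  obtain ⟨h1, h2, rfl⟩ := transMap_eq_some_iff.mp h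
  exact ⟨h1, mem_minStates_leftQuot h1 h2⟩

theorem transMap_none_of_not_mem {S q : Set (List A)} {x : Set (List A) → Option (Set (List A))}
    (hx : x ∈ transMonoid S) (h : q ∉ MinStates S) : x q = none := by
  obtain ⟨u, rfl⟩ := hx; exact transMap_apply_none (by tauto)

theorem e_apply {S q : Set (List A)} (hq : q ∈ MinStates S) : transMap S [] q = some q := by
  have : (leftQuot q []).Nonempty := by rw [leftQuot_nil]; exact hq.1
  rw [transMap_apply_of_mem hq this, leftQuot_nil]

theorem pcomp_e_left {S : Set (List A)} {x : Set (List A) → Option (Set (List A))}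
    (hx : x ∈ transMonoid S) : pcomp (transMap S []) x = x := by
  funext q
  by_cases hq : q ∈ MinStates S
  · simp [pcomp, e_apply hq]
  · simp [pcomp, transMap_apply_none (S := S) (u := ([] : List A)) (by tauto),
      transMap_none_of_not_mem hx hq]

theorem pcomp_e_right {S : Set (List A)} {x : Set (List A) → Option (Set (List A))}
    (hx : x ∈ transMonoid S) : pcomp x (transMap S []) = x := by
  funext q
  cases hxq : x q with
  | none => simp [pcomp, hxq]
  | some t => simp [pcomp, hxq, e_apply (transMap_mem_value hx hxq).2]

-- ### dom / img / pimg

def pdom {σ : Type*} (x : σ → Option σ) : Set σ := {q | ∃ t, x q = some t}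
def pimgOn {σ : Type*} (x : σ → Option σ) (s : Set σ) : Set σ := {t | ∃ q ∈ s, x q = some t}
def pimg {σ : Type*} (x : σ → Option σ) : Set σ := {t | ∃ q, x q = some t}

theorem pimg_pcomp {σ : Type*} (x y : σ → Option σ) :
    pimg (pcomp x y) = pimgOn y (pimg x) := by
  ext t
  constructor
  · rintro ⟨q, hq⟩
    cases hxq : x q with
    | none => rw [pcomp, hxq] at hq; cases hq
    | some j => rw [pcomp, hxq] at hq; exact ⟨j, ⟨q, hxq⟩, hq⟩
  · rintro ⟨j, ⟨q, hq⟩, hj⟩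
    exact ⟨q, by rw [pcomp, hq]; exact hj⟩

theorem pimgOn_subset_pimg {σ : Type*} (x : σ → Option σ) (s : Set σ) :
    pimgOn x s ⊆ pimg x := by rintro t ⟨q, -, hq⟩; exact ⟨q, hq⟩

theorem pimgOn_eq_image {σ : Type*} [Inhabited σ] (x : σ → Option σ) (s : Set σ) :
    pimgOn x s = (fun q => (x q).getD default) '' (s ∩ pdom x) := by
  ext t
  constructor
  · rintro ⟨q, hq, hxq⟩
    exact ⟨q, ⟨hq, t, hxq⟩, by simp [hxq]⟩
  · rintro ⟨q, ⟨hq, t', hxq⟩, rfl⟩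
    simp only [hxq, Option.getD_some]
    exact ⟨q, hq, hxq⟩

theorem ncard_pimgOn_le {σ : Type*} [Inhabited σ] (x : σ → Option σ) (s : Set σ)
    (hs : s.Finite) : (pimgOn x s).ncard ≤ s.ncard := by
  rw [pimgOn_eq_image]
  calc ((fun q => (x q).getD default) '' (s ∩ pdom x)).ncard
      ≤ (s ∩ pdom x).ncard := Set.ncard_image_le (hs.inter_of_left _)
    _ ≤ s.ncard := Set.ncard_le_ncard Set.inter_subset_left hs

-- ### finiteness

theorem minStates_finite {S : Set (List A)} (hS : Recognizable S) : (MinStates S).Finite :=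
  hS.subset (by rintro q ⟨-, u, rfl⟩; exact ⟨u, rfl⟩)

theorem pimg_subset_minStates {S : Set (List A)} {x : Set (List A) → Option (Set (List A))}
    (hx : x ∈ transMonoid S) : pimg x ⊆ MinStates S := by
  rintro t ⟨q, hq⟩; exact (transMap_mem_value hx hq).2

theorem pdom_subset_minStates {S : Set (List A)} {x : Set (List A) → Option (Set (List A))}
    (hx : x ∈ transMonoid S) : pdom x ⊆ MinStates S := by
  rintro q ⟨t, hq⟩; exact (transMap_mem_value hx hq).1

open Classical in
theorem transMonoid_finite {S : Set (List A)} (hS : Recognizable S) :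
    (transMonoid S).Finite := by
  have hQ : (MinStates S).Finite := minStates_finite hS
  haveI : Finite ↥(MinStates S) := hQ.to_subtype
  set g : (Set (List A) → Option (Set (List A))) →
      (↥(MinStates S) → Option ↥(MinStates S)) := fun x q =>
    (x ↑q).bind (fun t => if h : t ∈ MinStates S then some ⟨t, h⟩ else none) with hg
  haveI := hQ.fintype
  haveI := Classical.decEq (↥(MinStates S))
  haveI hpi : Finite (↥(MinStates S) → Option ↥(MinStates S)) := Finite.of_fintype _
  have himg : (g '' transMonoid S).Finite := Set.toFinite _
  refine Set.Finite.of_finite_image himg ?_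
  intro x hx y hy hxy
  funext q
  by_cases hq : q ∈ MinStates S
  · have := congrFun hxy ⟨q, hq⟩
    simp only [hg] at this
    cases hxq : x q with
    | none =>
      cases hyq : y q with
      | none => rfl
      | some t =>
        rw [hxq, hyq] at this
        have ht : t ∈ MinStates S := (transMap_mem_value hy hyq).2
        simp [ht] at this
    | some t =>
      have ht : t ∈ MinStates S := (transMap_mem_value hx hxq).2
      cases hyq : y q with
      | none => rw [hxq, hyq] at this; simp [ht] at this
      | some t' =>
        have ht' : t' ∈ MinStates S := (transMap_mem_value hy hyq).2
        rw [hxq, hyq] at this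
        simp only [Option.bind_some, ht, ht', dif_pos] at this
        have h2 : (⟨t, ht⟩ : ↥(MinStates S)) = ⟨t', ht'⟩ := Option.some_inj.mp this
        exact congrArg some (Subtype.mk_eq_mk.mp h2)
  · rw [transMap_none_of_not_mem hx hq, transMap_none_of_not_mem hy hq]

-- ### rank

theorem pimg_transMap (S : Set (List A)) (u : List A) :
    pimg (transMap S u) = {T : Set (List A) | T.Nonempty ∧ ∃ u' : List A, T = leftQuot S (u' ++ u)} := by
  ext t
  constructor
  · rintro ⟨q, hq⟩
    obtain ⟨hq1, hq2, rfl⟩ := transMap_eq_some_iff.mp hq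
    obtain ⟨-, u', rfl⟩ := hq1
    exact ⟨hq2, u', (leftQuot_append S u' u).symm⟩
  · rintro ⟨ht, u', rfl⟩
    rw [leftQuot_append] at ht ⊢
    have hq : leftQuot S u' ∈ MinStates S := ⟨leftQuot_sub_nonempty ht, u', rfl⟩
    exact ⟨leftQuot S u', transMap_apply_of_mem hq ht⟩

theorem mrank_eq_ncard_pimg (S : Set (List A)) (u : List A) :
    mrank S u = (pimg (transMap S u)).ncard := by rw [pimg_transMap]; rfl

theorem pimg_nonempty {S : Set (List A)} (hdense : ∀ v : List A, ∃ u w : List A, u ++ v ++ w ∈ S)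
    (u : List A) : (pimg (transMap S u)).Nonempty := by
  obtain ⟨x, y, hxy⟩ := hdense u
  rw [pimg_transMap]
  refine ⟨leftQuot S (x ++ u), ⟨⟨y, ?_⟩, x, rfl⟩⟩
  simpa [leftQuot, List.append_assoc] using hxy

theorem pimg_finite {S : Set (List A)} (hS : Recognizable S)
    {x : Set (List A) → Option (Set (List A))} (hx : x ∈ transMonoid S) : (pimg x).Finite :=
  (minStates_finite hS).subset (pimg_subset_minStates hx)

theorem rank_ge {S : Set (List A)} (hS : Recognizable S)
    (hdense : ∀ v : List A, ∃ u w : List A, u ++ v ++ w ∈ S)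
    {w : List A} (hw : ∀ v : List A, mrank S v ≠ 0 → mrank S w ≤ mrank S v)
    {x : Set (List A) → Option (Set (List A))} (hx : x ∈ transMonoid S) :
    mrank S w ≤ (pimg x).ncard := by
  obtain ⟨u, rfl⟩ := hx
  rw [← mrank_eq_ncard_pimg]
  refine hw u ?_
  rw [mrank_eq_ncard_pimg]
  exact ((Set.ncard_pos (pimg_finite hS ⟨u, rfl⟩)).mpr (pimg_nonempty hdense u)).ne'

/-- The master lemma: if `x` has minimal rank then `pimg x ⊆ pdom y`, `y` is injective
on `pimg x`, and composing keeps the rank minimal. -/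
theorem master {S : Set (List A)} (hS : Recognizable S)
    (hdense : ∀ v : List A, ∃ u w : List A, u ++ v ++ w ∈ S)
    {w : List A} (hw : ∀ v : List A, mrank S v ≠ 0 → mrank S w ≤ mrank S v)
    {x y : Set (List A) → Option (Set (List A))}
    (hx : x ∈ transMonoid S) (hy : y ∈ transMonoid S)
    (hrx : (pimg x).ncard = mrank S w) :
    pimg x ⊆ pdom y ∧
      (∀ j ∈ pimg x, ∀ j' ∈ pimg x, y j = y j' → j = j') ∧
      pimg (pcomp x y) = pimgOn y (pimg x) ∧
      (pimg (pcomp x y)).ncard = mrank S w := by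
  haveI : Inhabited (Set (List A)) := ⟨∅⟩
  have hIfin : (pimg x).Finite := pimg_finite hS hx
  have hcomp : pcomp x y ∈ transMonoid S := pcomp_mem hx hy
  have h1 : pimg (pcomp x y) = pimgOn y (pimg x) := pimg_pcomp x y
  -- rank of the composition
  have hge : mrank S w ≤ (pimg (pcomp x y)).ncard := rank_ge hS hdense hw hcomp
  have hinter : pimg x ∩ pdom y ⊆ pimg x := Set.inter_subset_left
  have hle2 : (pimg x ∩ pdom y).ncard ≤ (pimg x).ncard := Set.ncard_le_ncard hinter hIfin
  have himg_eq : pimgOn y (pimg x) = (fun q => (y q).getD default) '' (pimg x ∩ pdom y) :=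
    pimgOn_eq_image y (pimg x)
  have hle1 : (pimgOn y (pimg x)).ncard ≤ (pimg x ∩ pdom y).ncard := by
    rw [himg_eq]; exact Set.ncard_image_le (hIfin.inter_of_left _)
  rw [h1] at hge
  have hall1 : (pimgOn y (pimg x)).ncard = (pimg x).ncard := by omega
  have hall2 : (pimg x ∩ pdom y).ncard = (pimg x).ncard := by omega
  have heq : pimg x ∩ pdom y = pimg x :=
    Set.eq_of_subset_of_ncard_le hinter hall2.ge hIfin
  have hsub : pimg x ⊆ pdom y := by
    intro j hj
    have : j ∈ pimg x ∩ pdom y := heq.symm ▸ hj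
    exact this.2
  have hinj : Set.InjOn (fun q => (y q).getD default) (pimg x) := by
    apply Set.injOn_of_ncard_image_eq _ hIfin
    have himg2 : (fun q => (y q).getD default) '' (pimg x) = pimgOn y (pimg x) := by
      rw [himg_eq, heq]
    rw [himg2]
    exact hall1
  refine ⟨hsub, ?_, h1, by rw [h1]; omega⟩
  intro j hj j' hj' hyy
  exact hinj hj hj' (by simp only [hyy])
-- ### iterated composition

noncomputable def ypow (S : Set (List A)) (y : Set (List A) → Option (Set (List A))) :
    ℕ → Set (List A) → Option (Set (List A))
  | 0 => transMap S []
  | n + 1 => pcomp (ypow S y n) y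

theorem ypow_mem {S : Set (List A)} {y : Set (List A) → Option (Set (List A))}
    (hy : y ∈ transMonoid S) (n : ℕ) : ypow S y n ∈ transMonoid S := by
  induction n with
  | zero => exact e_mem S
  | succ n ih => exact pcomp_mem ih hy

theorem ypow_one {S : Set (List A)} {y : Set (List A) → Option (Set (List A))}
    (hy : y ∈ transMonoid S) : ypow S y 1 = y := pcomp_e_left hy

theorem ypow_add {S : Set (List A)} {y : Set (List A) → Option (Set (List A))}
    (hy : y ∈ transMonoid S) (a b : ℕ) :
    ypow S y (a + b) = pcomp (ypow S y a) (ypow S y b) := by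
  induction b with
  | zero => exact (pcomp_e_right (ypow_mem hy a)).symm
  | succ b ih =>
    show ypow S y (a + b + 1) = _
    show pcomp (ypow S y (a + b)) y = _
    rw [ih, pcomp_assoc]
    rfl

-- ### reachability

theorem reach {S : Set (List A)}
    (hrec : ∀ u v : List A, (leftQuot S u).Nonempty → (leftQuot S v).Nonempty →
      ∃ z : List A, leftQuot S (u ++ z) = leftQuot S v)
    {p q : Set (List A)} (hp : p ∈ MinStates S) (hq : q ∈ MinStates S) :
    ∃ z : List A, transMap S z p = some q := by
  obtain ⟨hpne, u, rfl⟩ := hp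
  obtain ⟨hqne, v, rfl⟩ := hq
  obtain ⟨z, hz⟩ := hrec u v hpne hqne
  refine ⟨z, transMap_eq_some_iff.mpr ⟨⟨hpne, u, rfl⟩, ?_, ?_⟩⟩
  · rw [← leftQuot_append, hz]; exact hqne
  · rw [← leftQuot_append, hz]

-- ### minimal-rank images

section MinRank

variable {S : Set (List A)} (hS : Recognizable S)
  (hdense : ∀ v : List A, ∃ u w : List A, u ++ v ++ w ∈ S)
  {w : List A} (hw : ∀ v : List A, mrank S v ≠ 0 → mrank S w ≤ mrank S v)

include hS hdense hw

/-- Any element of the monoid whose image is inside a minimal image has image equal to it. -/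
theorem sub_I_eq {m x : Set (List A) → Option (Set (List A))}
    (hm : m ∈ transMonoid S) (hrm : (pimg m).ncard = mrank S w)
    (hx : x ∈ transMonoid S) (hsub : pimg x ⊆ pimg m) : pimg x = pimg m := by
  refine Set.eq_of_subset_of_ncard_le hsub ?_ (pimg_finite hS hm)
  rw [hrm]
  exact rank_ge hS hdense hw hx

/-- Elements with image a fixed minimal image `I = pimg m` are closed under composition. -/
theorem U_closed {m x y : Set (List A) → Option (Set (List A))}
    (hm : m ∈ transMonoid S) (hrm : (pimg m).ncard = mrank S w)
    (hx : x ∈ transMonoid S) (hxI : pimg x = pimg m)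
    (hy : y ∈ transMonoid S) (hyI : pimg y = pimg m) :
    pcomp x y ∈ transMonoid S ∧ pimg (pcomp x y) = pimg m := by
  refine ⟨pcomp_mem hx hy, sub_I_eq hS hdense hw hm hrm (pcomp_mem hx hy) ?_⟩
  rw [pimg_pcomp]
  exact (pimgOn_subset_pimg y _).trans hyI.le

/-- The inverse lemma: every element with image `I` has an "inverse on `I`". -/
theorem exists_inverse {m y : Set (List A) → Option (Set (List A))}
    (hm : m ∈ transMonoid S) (hrm : (pimg m).ncard = mrank S w)
    (hy : y ∈ transMonoid S) (hyI : pimg y = pimg m) :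
    ∃ y', y' ∈ transMonoid S ∧ pimg y' = pimg m ∧
      (∀ j ∈ pimg m, pcomp y y' j = some j) ∧ (∀ j ∈ pimg m, pcomp y' y j = some j) := by
  -- powers of y with positive exponent have image I
  have hpow : ∀ n : ℕ, 1 ≤ n → ypow S y n ∈ transMonoid S ∧ pimg (ypow S y n) = pimg m := by
    intro n hn
    induction n with
    | zero => omega
    | succ n ih =>
      rcases Nat.eq_or_lt_of_le hn with h1 | h1
      · rw [← h1, ypow_one hy]; exact ⟨hy, hyI⟩
      · have ih' := ih (by omega)
        exact ⟨pcomp_mem ih'.1 hy, (U_closed hS hdense hw hm hrm ih'.1 ih'.2 hy hyI).2⟩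
  -- pigeonhole: some power repeats
  haveI : Finite ↥(transMonoid S) := (transMonoid_finite hS).to_subtype
  obtain ⟨a, b, hab, heq⟩ : ∃ a b : ℕ, a ≠ b ∧ ypow S y (a + 1) = ypow S y (b + 1) := by
    obtain ⟨a, b, hab, h⟩ := Finite.exists_ne_map_eq_of_infinite
      (fun n : ℕ => (⟨ypow S y (n + 1), ypow_mem hy (n + 1)⟩ : ↥(transMonoid S)))
    exact ⟨a, b, hab, congrArg Subtype.val h⟩
  wlog hlt : a < b generalizing a b
  · exact this b a hab.symm heq.symm (by omega)
  obtain ⟨c, hc1, hcb⟩ : ∃ c, 1 ≤ c ∧ b = a + c := ⟨b - a, by omega, by omega⟩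
  -- the c-th power fixes I pointwise
  have hfix : ∀ j ∈ pimg m, ypow S y c j = some j := by
    intro j hj
    have hdomc : pimg m ⊆ pdom (ypow S y c) :=
      (master hS hdense hw hm (ypow_mem hy c) hrm).1
    obtain ⟨j₁, hj₁⟩ : ∃ j₁, ypow S y c j = some j₁ := hdomc hj
    have hj₁I : j₁ ∈ pimg m := by
      rw [← (hpow c hc1).2]; exact ⟨j, hj₁⟩
    have hsplit : ypow S y (b + 1) = pcomp (ypow S y c) (ypow S y (a + 1)) := by
      have h0 : b + 1 = c + (a + 1) := by omega
      rw [h0, ypow_add hy]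
    have hval : ypow S y (a + 1) j = ypow S y (a + 1) j₁ := by
      conv_lhs => rw [heq, hsplit]
      simp only [pcomp, hj₁]
      rfl
    have hinj := (master hS hdense hw hm (ypow_mem hy (a + 1)) hrm).2.1
    have heqj : j = j₁ := hinj j hj j₁ hj₁I hval
    rw [heqj] at hj₁ ⊢
    exact hj₁
  obtain ⟨n, hn⟩ : ∃ n, 2 * c = n + 1 := ⟨2 * c - 1, by omega⟩
  have hid : ∀ j ∈ pimg m, ypow S y (2 * c) j = some j := by
    intro j hj
    have h2 : ypow S y (2 * c) = pcomp (ypow S y c) (ypow S y c) := by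
      have h3 : 2 * c = c + c := by omega
      rw [h3, ypow_add hy]
    rw [h2]
    simp only [pcomp, hfix j hj]
    exact hfix j hj
  refine ⟨ypow S y n, (hpow _ (by omega)).1, (hpow _ (by omega)).2, ?_, ?_⟩
  · intro j hj
    have h4 : pcomp y (ypow S y n) = ypow S y (2 * c) := by
      rw [hn, show n + 1 = 1 + n by omega, ypow_add hy, ypow_one hy]
    rw [h4]; exact hid j hj
  · intro j hj
    have h4 : pcomp (ypow S y n) y = ypow S y (2 * c) := by
      rw [hn, ypow_add hy, ypow_one hy]
    rw [h4]; exact hid j hj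

end MinRank

theorem pdom_pcomp_subset {σ : Type*} (x y : σ → Option σ) : pdom (pcomp x y) ⊆ pdom x := by
  rintro q ⟨t, ht⟩
  cases hxq : x q with
  | none => rw [pcomp, hxq] at ht; cases ht
  | some j => exact ⟨j, hxq⟩

theorem pimg_pcomp_subset {σ : Type*} (x y : σ → Option σ) : pimg (pcomp x y) ⊆ pimg y := by
  rw [pimg_pcomp]; exact pimgOn_subset_pimg y (pimg x)

theorem pcomp_id_on {σ : Type*} {h z : σ → Option σ} {I : Set σ}
    (hz : ∀ j ∈ I, z j = some j) (hsub : pimg h ⊆ I) : pcomp h z = h := by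
  funext q
  cases hq : h q with
  | none => rw [pcomp, hq]; rfl
  | some t => rw [pcomp, hq]; exact hz t (hsub ⟨q, hq⟩)

theorem greenR_trans {S : Set (List A)} {a b c : Set (List A) → Option (Set (List A))}
    (hab : GreenR (transMonoid S) a b) (hbc : GreenR (transMonoid S) b c) :
    GreenR (transMonoid S) a c := by
  obtain ⟨⟨p1, hp1, hab1⟩, ⟨p2, hp2, hab2⟩⟩ := hab
  obtain ⟨⟨q1, hq1, hbc1⟩, ⟨q2, hq2, hbc2⟩⟩ := hbc
  exact ⟨⟨pcomp p1 q1, pcomp_mem hp1 hq1, by rw [← pcomp_assoc, hab1, hbc1]⟩,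
    ⟨pcomp q2 p2, pcomp_mem hq2 hp2, by rw [← pcomp_assoc, hbc2, hab2]⟩⟩

theorem greenL_trans {S : Set (List A)} {a b c : Set (List A) → Option (Set (List A))}
    (hab : GreenL (transMonoid S) a b) (hbc : GreenL (transMonoid S) b c) :
    GreenL (transMonoid S) a c := by
  obtain ⟨⟨p1, hp1, hab1⟩, ⟨p2, hp2, hab2⟩⟩ := hab
  obtain ⟨⟨q1, hq1, hbc1⟩, ⟨q2, hq2, hbc2⟩⟩ := hbc
  exact ⟨⟨pcomp q1 p1, pcomp_mem hq1 hp1, by rw [pcomp_assoc, hab1, hbc1]⟩,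
    ⟨pcomp p2 q2, pcomp_mem hp2 hq2, by rw [pcomp_assoc, hbc2, hab2]⟩⟩

section MinRank2

variable {S : Set (List A)} (hS : Recognizable S)
  (hdense : ∀ v : List A, ∃ u w : List A, u ++ v ++ w ∈ S)
  {w : List A} (hw : ∀ v : List A, mrank S v ≠ 0 → mrank S w ≤ mrank S v)

include hS hdense hw

theorem rank_of_mem_minIdeal {K : Set (Set (List A) → Option (Set (List A)))}
    (hK : IsMinimalIdeal (transMonoid S) K) {x : Set (List A) → Option (Set (List A))}
    (hx : x ∈ K) : x ∈ transMonoid S ∧ (pimg x).ncard = mrank S w := by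
  haveI : Inhabited (Set (List A)) := ⟨∅⟩
  have hD : IsIdeal (transMonoid S)
      {x | x ∈ transMonoid S ∧ (pimg x).ncard = mrank S w} := by
    refine ⟨⟨transMap S w, ⟨w, rfl⟩, (mrank_eq_ncard_pimg S w).symm⟩, fun x hx => hx.1, ?_⟩
    rintro x' ⟨hx'M, hx'r⟩ p hp q hq
    have hmem1 : pcomp p x' ∈ transMonoid S := pcomp_mem hp hx'M
    have hmem2 : pcomp (pcomp p x') q ∈ transMonoid S := pcomp_mem hmem1 hq
    refine ⟨hmem2, ?_⟩
    have hr1 : (pimg (pcomp p x')).ncard = mrank S w := by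
      refine le_antisymm ?_ (rank_ge hS hdense hw hmem1)
      calc (pimg (pcomp p x')).ncard
          ≤ (pimg x').ncard := Set.ncard_le_ncard (pimg_pcomp_subset p x') (pimg_finite hS hx'M)
        _ = mrank S w := hx'r
    refine le_antisymm ?_ (rank_ge hS hdense hw hmem2)
    calc (pimg (pcomp (pcomp p x') q)).ncard
        = (pimgOn q (pimg (pcomp p x'))).ncard := by rw [pimg_pcomp]
      _ ≤ (pimg (pcomp p x')).ncard := ncard_pimgOn_le q _ (pimg_finite hS hmem1)
      _ = mrank S w := hr1
  exact hK.2 _ hD hx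

/-- Any two monoid elements with the same minimal image are `𝓛`-equivalent. -/
theorem greenL_of_img_eq {m x₁ x₂ : Set (List A) → Option (Set (List A))}
    (hm : m ∈ transMonoid S) (hrm : (pimg m).ncard = mrank S w)
    (hx₁ : x₁ ∈ transMonoid S) (hI₁ : pimg x₁ = pimg m)
    (hx₂ : x₂ ∈ transMonoid S) (hI₂ : pimg x₂ = pimg m) :
    GreenL (transMonoid S) x₁ x₂ := by
  have half : ∀ y₁ y₂ : Set (List A) → Option (Set (List A)), y₁ ∈ transMonoid S →
      pimg y₁ = pimg m → y₂ ∈ transMonoid S → pimg y₂ = pimg m →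
      ∃ p ∈ transMonoid S, pcomp p y₁ = y₂ := by
    intro y₁ y₂ hy₁ hI1 hy₂ hI2
    obtain ⟨y₁', hy₁'M, -, -, hinv⟩ := exists_inverse hS hdense hw hm hrm hy₁ hI1
    refine ⟨pcomp y₂ y₁', pcomp_mem hy₂ hy₁'M, ?_⟩
    rw [pcomp_assoc]
    exact pcomp_id_on hinv hI2.le
  exact ⟨half x₁ x₂ hx₁ hI₁ hx₂ hI₂, half x₂ x₁ hx₂ hI₂ hx₁ hI₁⟩

/-- Right multiplication by an element with image `I` preserves the `𝓗`-class of `m`. -/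
theorem mem_H_pcomp {m h y : Set (List A) → Option (Set (List A))}
    (hm : m ∈ transMonoid S) (hrm : (pimg m).ncard = mrank S w)
    (hhM : h ∈ transMonoid S) (hH : GreenH (transMonoid S) h m)
    (hyM : y ∈ transMonoid S) (hyI : pimg y = pimg m) :
    pcomp h y ∈ transMonoid S ∧ GreenH (transMonoid S) (pcomp h y) m := by
  have hhI : pimg h = pimg m := by
    obtain ⟨-, ⟨p1, hp1, hL1⟩, ⟨p2, hp2, hL2⟩⟩ := hH
    refine Set.Subset.antisymm ?_ ?_
    · rw [← hL2]; exact pimg_pcomp_subset p2 m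
    · rw [← hL1]; exact pimg_pcomp_subset p1 h
  have hhyM : pcomp h y ∈ transMonoid S := pcomp_mem hhM hyM
  have hhyI : pimg (pcomp h y) = pimg m := by
    refine sub_I_eq hS hdense hw hm hrm hhyM ?_
    exact (pimg_pcomp_subset h y).trans hyI.le
  obtain ⟨y', hy'M, -, hinvR, -⟩ := exists_inverse hS hdense hw hm hrm hyM hyI
  have hRhy : GreenR (transMonoid S) (pcomp h y) h := by
    constructor
    · exact ⟨y', hy'M, by rw [pcomp_assoc]; exact pcomp_id_on hinvR hhI.le⟩
    · exact ⟨y, hyM, rfl⟩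
  have hLhy : GreenL (transMonoid S) (pcomp h y) h :=
    greenL_of_img_eq hS hdense hw hm hrm hhyM hhyI hhM hhI
  exact ⟨hhyM, greenR_trans hRhy hH.1, greenL_trans hLhy hH.2⟩

theorem trans_witness {m : Set (List A) → Option (Set (List A))}
    (hrec : ∀ u v : List A, (leftQuot S u).Nonempty → (leftQuot S v).Nonempty →
      ∃ z : List A, leftQuot S (u ++ z) = leftQuot S v)
    (hm : m ∈ transMonoid S) (hrm : (pimg m).ncard = mrank S w)
    {t t' : Set (List A)} (ht : t ∈ pimg m) (ht' : t' ∈ pimg m) :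
    ∃ y, y ∈ transMonoid S ∧ pimg y = pimg m ∧ y t = some t' := by
  obtain ⟨z, hz⟩ := reach hrec (pimg_subset_minStates hm ht) (pimg_subset_minStates hm ht')
  obtain ⟨m', hm'M, hm'I, hinv1, -⟩ := exists_inverse hS hdense hw hm hrm hm rfl
  have hzM : transMap S z ∈ transMonoid S := ⟨z, rfl⟩
  refine ⟨pcomp (transMap S z) (pcomp m m'),
    pcomp_mem hzM (pcomp_mem hm hm'M), ?_, ?_⟩
  · refine sub_I_eq hS hdense hw hm hrm (pcomp_mem hzM (pcomp_mem hm hm'M)) ?_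
    refine (pimg_pcomp_subset _ _).trans ?_
    exact (pimg_pcomp_subset m m').trans hm'I.le
  · show ((transMap S z t).bind (pcomp m m')) = some t'
    rw [hz]
    exact hinv1 t' ht'

end MinRank2

end Birec

open Birec

/-- **Proposition.** Let `S` be a dense birecurrent set with minimal automaton `𝒜`.
For every `𝓗`-class `H` of the minimal ideal of the transition monoid `φ_𝒜(A*)`,
`i(S) = Card(H) / Card(H ∩ φ_𝒜(S))`, where the index `i(S) = d / k` is computed from
any word `w` of minimal nonzero rank `d` saturating the set of terminal states, `k`
being the number of classes of the kernel of `w` whose union is the terminal set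
(equivalently, the number of images of terminal states under `w`). -/
theorem index_eq_card_H_div_card_H_inter {A : Type*} [Fintype A] (S : Set (List A))
    (hdense : LangDense S) (hbi : Birecurrent S)
    (w : List A) (hw : IsMinNonzeroMrank S w) (hsat : SaturatedBy S w)
    (K : Set (Set (List A) → Option (Set (List A))))
    (hK : IsMinimalIdeal (transMonoid S) K)
    (m : Set (List A) → Option (Set (List A))) (hm : m ∈ K) :
    (mrank S w : ℚ) /
        (({T : Set (List A) | ∃ q ∈ TerminalStates S, T = leftQuot q w}.ncard : ℚ)) =
      ({n | n ∈ transMonoid S ∧ GreenH (transMonoid S) n m}.ncard : ℚ) /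
        (({n | n ∈ transMonoid S ∧ GreenH (transMonoid S) n m} ∩
            {n | ∃ u ∈ S, n = transMap S u}).ncard : ℚ) := by
  classical
  obtain ⟨⟨hS, hrec⟩, -⟩ := hbi
  have hdense' : ∀ v : List A, ∃ u w : List A, u ++ v ++ w ∈ S := hdense
  have hwmin : ∀ v : List A, mrank S v ≠ 0 → mrank S w ≤ mrank S v := hw.2
  haveI : Inhabited (Set (List A)) := ⟨∅⟩
  have hMK : K ⊆ transMonoid S := hK.1.2.1
  have hmM : m ∈ transMonoid S := hMK hm
  have hrm : (pimg m).ncard = mrank S w :=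
    (rank_of_mem_minIdeal hS hdense' hwmin hK hm).2
  have hIfin : (pimg m).Finite := pimg_finite hS hmM
  have hIQ : pimg m ⊆ MinStates S := pimg_subset_minStates hmM
  have hd0 : mrank S w ≠ 0 := hw.1
  have hIne : (pimg m).Nonempty := by
    by_contra hcon
    rw [Set.not_nonempty_iff_eq_empty] at hcon
    rw [hcon, Set.ncard_empty] at hrm
    exact hd0 hrm.symm
  -- the initial state S
  have hSne : S.Nonempty := by
    obtain ⟨u, w', h⟩ := hdense' []
    exact ⟨u ++ [] ++ w', h⟩
  have hi0Q : S ∈ MinStates S := ⟨hSne, [], (leftQuot_nil S).symm⟩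
  -- the initial state is in the domain of m
  have hi0dom : ∃ t0, m S = some t0 := by
    obtain ⟨j, hj⟩ := hIne
    obtain ⟨z, hz⟩ := reach hrec (hIQ hj) hi0Q
    have hzM : transMap S z ∈ transMonoid S := ⟨z, rfl⟩
    have hyM : pcomp m (transMap S z) ∈ transMonoid S := pcomp_mem hmM hzM
    have hyr : (pimg (pcomp m (transMap S z))).ncard = mrank S w :=
      (master hS hdense' hwmin hmM hzM hrm).2.2.2
    have hSy : S ∈ pimg (pcomp m (transMap S z)) := by
      obtain ⟨q, hq⟩ := hj
      refine ⟨q, ?_⟩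
      show (m q).bind (transMap S z) = some S
      rw [hq]
      exact hz
    exact (master hS hdense' hwmin hyM hmM hyr).1 hSy
  obtain ⟨t0, ht0⟩ := hi0dom
  -- a point p₀ of the image with the same value as the initial state
  have hmm := master hS hdense' hwmin hmM hmM hrm
  have hmmI : pimg (pcomp m m) = pimg m :=
    sub_I_eq hS hdense' hwmin hmM hrm (pcomp_mem hmM hmM) (pimg_pcomp_subset m m)
  have ht0I : t0 ∈ pimg m := ⟨S, ht0⟩
  obtain ⟨p₀, hp₀I, hp₀⟩ : ∃ p₀ ∈ pimg m, m p₀ = some t0 := by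
    have h1 : pimgOn m (pimg m) = pimg m := by rw [← pimg_pcomp, hmmI]
    rw [← h1] at ht0I
    exact ht0I
  -- facts about H
  set Hset := {n | n ∈ transMonoid S ∧ GreenH (transMonoid S) n m} with hHsetdef
  have hmH : m ∈ Hset := by
    refine ⟨hmM, ⟨⟨transMap S [], e_mem S, pcomp_e_right hmM⟩,
      ⟨transMap S [], e_mem S, pcomp_e_right hmM⟩⟩,
      ⟨⟨transMap S [], e_mem S, pcomp_e_left hmM⟩,
      ⟨transMap S [], e_mem S, pcomp_e_left hmM⟩⟩⟩
  have hHimg : ∀ h ∈ Hset, pimg h = pimg m := by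
    rintro h ⟨hhM, -, ⟨p1, hp1, hL1⟩, ⟨p2, hp2, hL2⟩⟩
    refine Set.Subset.antisymm ?_ ?_
    · rw [← hL2]; exact pimg_pcomp_subset p2 m
    · rw [← hL1]; exact pimg_pcomp_subset p1 h
  have hHfac : ∀ h ∈ Hset, ∃ p ∈ transMonoid S, pcomp m p = h := by
    rintro h ⟨hhM, ⟨⟨-, hR2⟩, -⟩⟩
    exact hR2
  have hev0 : ∀ h ∈ Hset, h S = h p₀ := by
    intro h hh
    obtain ⟨p, hpM, rfl⟩ := hHfac h hh
    show (m S).bind p = (m p₀).bind p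
    rw [ht0, hp₀]
  have hHfin : Hset.Finite := (transMonoid_finite hS).subset (fun h hh => hh.1)
  have hevI : ∀ h ∈ Hset, ∃ t ∈ pimg m, h p₀ = some t := by
    intro h hh
    obtain ⟨t, ht⟩ := (master hS hdense' hwmin hmM hh.1 hrm).1 hp₀I
    refine ⟨t, ?_, ht⟩
    rw [← hHimg h hh]
    exact ⟨p₀, ht⟩
  -- Finsets and the evaluation map
  set FH := hHfin.toFinset with hFHdef
  set FI := hIfin.toFinset with hFIdef
  set ev : (Set (List A) → Option (Set (List A))) → Set (List A) :=
    fun h => (h p₀).getD ∅ with hevdef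
  have hevmem : ∀ h ∈ Hset, h p₀ = some (ev h) ∧ ev h ∈ pimg m := by
    intro h hh
    obtain ⟨t, htI, ht⟩ := hevI h hh
    have hevh : ev h = t := by rw [hevdef]; simp [ht]
    rw [hevh]
    exact ⟨ht, htI⟩
  -- all fibers of ev on H have the same cardinality
  have hfib : ∀ t ∈ pimg m, ∀ t' ∈ pimg m,
      (FH.filter (fun h => ev h = t)).card = (FH.filter (fun h => ev h = t')).card := by
    intro t ht t' ht'
    obtain ⟨y, hyM, hyI, hyt⟩ := trans_witness hS hdense' hwmin hrec hmM hrm ht ht'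
    obtain ⟨y₂, hy₂M, hy₂I, hinv1, hinv2⟩ :=
      exists_inverse hS hdense' hwmin hmM hrm hyM hyI
    have hy₂t : y₂ t' = some t := by
      have h1 := hinv1 t ht
      rw [pcomp] at h1
      rw [hyt] at h1
      exact h1
    have hmove : ∀ (z z' : Set (List A)) (y' : Set (List A) → Option (Set (List A))),
        y' ∈ transMonoid S → pimg y' = pimg m → y' z = some z' →
        ∀ h ∈ FH.filter (fun h => ev h = z), pcomp h y' ∈ FH.filter (fun h => ev h = z') := by
      intro z z' y' hy'M hy'I hy'z h hh
      rw [Finset.mem_filter, hHfin.mem_toFinset] at hh ⊢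
      obtain ⟨hhH, hhev⟩ := hh
      have hhy' : pcomp h y' ∈ Hset :=
        ⟨(mem_H_pcomp hS hdense' hwmin hmM hrm hhH.1 hhH.2 hy'M hy'I).1,
         (mem_H_pcomp hS hdense' hwmin hmM hrm hhH.1 hhH.2 hy'M hy'I).2⟩
      refine ⟨hhy', ?_⟩
      have h1 := (hevmem h hhH).1
      rw [hhev] at h1
      have h2 : (pcomp h y') p₀ = some z' := by
        show (h p₀).bind y' = some z'
        rw [h1]
        exact hy'z
      rw [hevdef]
      simp [h2]
    have hback : ∀ (y' y'' : Set (List A) → Option (Set (List A))),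
        (∀ j ∈ pimg m, pcomp y' y'' j = some j) →
        ∀ h ∈ Hset, pcomp (pcomp h y') y'' = h := by
      intro y' y'' hid h hh
      rw [pcomp_assoc]
      exact pcomp_id_on hid (hHimg h hh).le
    refine Finset.card_bij' (fun h _ => pcomp h y) (fun h _ => pcomp h y₂)
      (hmove t t' y hyM hyI hyt) (hmove t' t y₂ hy₂M hy₂I hy₂t) ?_ ?_
    · intro h hh
      rw [Finset.mem_filter, hHfin.mem_toFinset] at hh
      exact hback y y₂ hinv1 h hh.1
    · intro h hh
      rw [Finset.mem_filter, hHfin.mem_toFinset] at hh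
      exact hback y₂ y hinv2 h hh.1
  -- the number of elements in each fiber
  set N := (FH.filter (fun h => ev h = ev m)).card with hNdef
  have hevmI : ev m ∈ pimg m := (hevmem m hmH).2
  have hmaps : ∀ h ∈ FH, ev h ∈ FI := by
    intro h hh
    rw [hHfin.mem_toFinset] at hh
    rw [hFIdef, hIfin.mem_toFinset]
    exact (hevmem h hh).2
  -- Card H = d * N
  have hcardH : FH.card = FI.card * N := by
    rw [Finset.card_eq_sum_card_fiberwise hmaps]
    rw [Finset.sum_congr rfl (fun t ht => hfib t (by rwa [hFIdef, hIfin.mem_toFinset] at ht)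
      (ev m) hevmI)]
    rw [Finset.sum_const, smul_eq_mul]
  -- membership in φ(S)
  have hφS : ∀ h ∈ Hset, ((∃ u ∈ S, h = transMap S u) ↔ [] ∈ ev h) := by
    intro h hh
    have hSev : h S = some (ev h) := by rw [hev0 h hh]; exact (hevmem h hh).1
    constructor
    · rintro ⟨u, huS, rfl⟩
      have hne : (leftQuot S u).Nonempty := ⟨[], by simpa [leftQuot] using huS⟩
      have h1 : transMap S u S = some (leftQuot S u) := transMap_apply_of_mem hi0Q hne
      rw [h1] at hSev
      have h2 : ev (transMap S u) = leftQuot S u := (Option.some_inj.mp hSev).symm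
      rw [h2]
      show u ++ [] ∈ S
      simpa using huS
    · intro h0
      obtain ⟨u, rfl⟩ := hh.1
      obtain ⟨-, -, hval⟩ := transMap_eq_some_iff.mp hSev
      refine ⟨u, ?_, rfl⟩
      rw [hval] at h0
      have : u ++ [] ∈ S := h0
      simpa using this
  -- Card (H ∩ φ(S)) = k * N
  have hHSset : Hset ∩ {n | ∃ u ∈ S, n = transMap S u} =
      ↑(FH.filter (fun h => [] ∈ ev h)) := by
    ext h
    simp only [Set.mem_inter_iff, Finset.coe_filter, Set.mem_setOf_eq, hFHdef, hHfin.mem_toFinset]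
    exact ⟨fun ⟨h1, h2⟩ => ⟨h1, (hφS h h1).mp h2⟩, fun ⟨h1, h2⟩ => ⟨h1, (hφS h h1).mpr h2⟩⟩
  have hcardHS : (FH.filter (fun h => [] ∈ ev h)).card =
      (FI.filter (fun t => [] ∈ t)).card * N := by
    have hmaps2 : ∀ h ∈ FH.filter (fun h => [] ∈ ev h), ev h ∈ FI.filter (fun t => [] ∈ t) := by
      intro h hh
      rw [Finset.mem_filter] at hh ⊢
      exact ⟨hmaps h hh.1, hh.2⟩
    rw [Finset.card_eq_sum_card_fiberwise hmaps2]
    have hfib2 : ∀ t ∈ FI.filter (fun t => [] ∈ t),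
        ((FH.filter (fun h => [] ∈ ev h)).filter (fun h => ev h = t)).card = N := by
      intro t ht
      rw [Finset.mem_filter] at ht
      obtain ⟨htF, htT⟩ := ht
      have h3 : (FH.filter (fun h => [] ∈ ev h)).filter (fun h => ev h = t) =
          FH.filter (fun h => ev h = t) := by
        rw [Finset.filter_filter]
        apply Finset.filter_congr
        intro h hh
        constructor
        · rintro ⟨-, h2⟩; exact h2
        · intro h2; exact ⟨by rw [h2]; exact htT, h2⟩
      rw [h3]
      exact hfib t (by rwa [hFIdef, hIfin.mem_toFinset] at htF) (ev m) hevmI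
    rw [Finset.sum_congr rfl hfib2, Finset.sum_const, smul_eq_mul]
  -- the k-lemma : the image of the terminal states under w
  have hφwM : transMap S w ∈ transMonoid S := ⟨w, rfl⟩
  have hmw := master hS hdense' hwmin hmM hφwM hrm
  have hwpdom : ∀ j ∈ pimg m, transMap S w j = some (leftQuot j w) := by
    intro j hj
    obtain ⟨t, ht⟩ := hmw.1 hj
    obtain ⟨h1, h2, rfl⟩ := transMap_eq_some_iff.mp ht
    exact ht
  have hpimgOn_w : pimgOn (transMap S w) (pimg m) = pimg (transMap S w) := by
    refine Set.eq_of_subset_of_ncard_le (pimgOn_subset_pimg _ _) ?_ (pimg_finite hS hφwM)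
    rw [← pimg_pcomp, hmw.2.2.2, ← mrank_eq_ncard_pimg]
  have hksetEq : {T : Set (List A) | ∃ q ∈ TerminalStates S, T = leftQuot q w} =
      (fun j => leftQuot j w) '' {t | t ∈ pimg m ∧ [] ∈ t} := by
    ext T
    constructor
    · rintro ⟨q, hq, rfl⟩
      have hqQ : q ∈ MinStates S := hq.1
      have hne : (leftQuot q w).Nonempty := hsat.1 q hq
      have hTpimg : leftQuot q w ∈ pimg (transMap S w) :=
        ⟨q, transMap_apply_of_mem hqQ hne⟩
      rw [← hpimgOn_w] at hTpimg
      obtain ⟨j, hjI, hjw⟩ := hTpimg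
      obtain ⟨hjQ, hjne, hjval⟩ := transMap_eq_some_iff.mp hjw
      have hiff := hsat.2 j q hjQ hqQ hjne hne hjval.symm
      exact ⟨j, ⟨hjI, hiff.mpr hq.2⟩, hjval.symm⟩
    · rintro ⟨j, ⟨hjI, hj0⟩, rfl⟩
      exact ⟨j, ⟨hIQ hjI, hj0⟩, rfl⟩
  have hkinj : Set.InjOn (fun j => leftQuot j w) {t | t ∈ pimg m ∧ [] ∈ t} := by
    rintro j ⟨hjI, -⟩ j' ⟨hj'I, -⟩ hjj
    refine hmw.2.1 j hjI j' hj'I ?_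
    rw [hwpdom j hjI, hwpdom j' hj'I]
    exact congrArg some hjj
  have hTIset : {t | t ∈ pimg m ∧ [] ∈ t} = ↑(FI.filter (fun t => [] ∈ t)) := by
    ext t
    simp only [Finset.coe_filter, Set.mem_setOf_eq, hFIdef, hIfin.mem_toFinset]
  have hkcard : {T : Set (List A) | ∃ q ∈ TerminalStates S, T = leftQuot q w}.ncard =
      (FI.filter (fun t => [] ∈ t)).card := by
    rw [hksetEq, Set.ncard_image_of_injOn hkinj, hTIset, Set.ncard_coe_finset]
  -- k ≥ 1
  have hTne : ∃ q, q ∈ TerminalStates S := by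
    obtain ⟨u₀, hu₀⟩ := hSne
    refine ⟨leftQuot S u₀, ⟨⟨⟨[], by simpa [leftQuot] using hu₀⟩, u₀, rfl⟩, ?_⟩⟩
    show u₀ ++ [] ∈ S
    simpa using hu₀
  have hkpos : 0 < (FI.filter (fun t => [] ∈ t)).card := by
    obtain ⟨q, hq⟩ := hTne
    have hmem : leftQuot q w ∈ {T : Set (List A) | ∃ q ∈ TerminalStates S, T = leftQuot q w} :=
      ⟨q, hq, rfl⟩
    rw [hksetEq] at hmem
    obtain ⟨j, hj, -⟩ := hmem
    rw [hTIset] at hj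
    exact Finset.card_pos.mpr ⟨j, by exact_mod_cast hj⟩
  -- N ≥ 1
  have hNpos : 0 < N := by
    refine Finset.card_pos.mpr ⟨m, ?_⟩
    rw [Finset.mem_filter, hHfin.mem_toFinset]
    exact ⟨hmH, rfl⟩
  -- d = Card I
  have hFIcard : FI.card = mrank S w := by
    rw [hFIdef, ← Set.ncard_eq_toFinset_card (pimg m) hIfin, hrm]
  -- assembling everything
  have hHcardSet : Hset.ncard = mrank S w * N := by
    rw [Set.ncard_eq_toFinset_card Hset hHfin, ← hFHdef, hcardH, hFIcard]
  have hHScardSet : (Hset ∩ {n | ∃ u ∈ S, n = transMap S u}).ncard =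
      (FI.filter (fun t => [] ∈ t)).card * N := by
    rw [hHSset, Set.ncard_coe_finset, hcardHS]
  rw [hHcardSet, hHScardSet, hkcard]
  have hNQ : (N : ℚ) ≠ 0 := by exact_mod_cast hNpos.ne'
  push_cast
  rw [mul_div_mul_right _ _ hNQ]
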